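/- Let V : ℝ^d → ℝ be smooth, and let f̃, g̃ : (0,1) × ℝ^d → ℝ be smooth and everywhere positive, satisfying ∂_t f̃ = (1/2)Δf̃ − V·f̃ and ∂_t g̃ = −(1/2)Δg̃ + V·g̃. Set μ := f̃·g̃ and v := (1/2)∇(log g̃ − log f̃). Then the continuity equation ∂_t μ + div(μ·v) = 0 holds at every point of (0,1) × ℝ^d; equivalently, ∂_t(f̃·g̃) = (1/2)·div( f̃·g̃·(∇ log f̃ − ∇ log g̃) ). -/

import Mathlib

noncomputable section

/-- Partial derivative in the `i`-th coordinate direction. -/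
def pd {d : ℕ} (i : Fin d) (f : (Fin d → ℝ) → ℝ) (x : Fin d → ℝ) : ℝ :=
  fderiv ℝ f x (Pi.single i 1)

/-- Spatial gradient. -/
def grad {d : ℕ} (f : (Fin d → ℝ) → ℝ) (x : Fin d → ℝ) : Fin d → ℝ :=
  fun i => pd i f x

/-- Spatial Laplacian. -/
def lap {d : ℕ} (f : (Fin d → ℝ) → ℝ) (x : Fin d → ℝ) : ℝ :=
  ∑ i, pd i (pd i f) x

/-- Spatial divergence of a vector field. -/
def dvg {d : ℕ} (w : (Fin d → ℝ) → Fin d → ℝ) (x : Fin d → ℝ) : ℝ :=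
  ∑ i, pd i (fun y => w y i) x

lemma contDiff_pd {d : ℕ} (i : Fin d) {f : (Fin d → ℝ) → ℝ}
    (hf : ContDiff ℝ (⊤ : ℕ∞) f) : ContDiff ℝ (⊤ : ℕ∞) (pd i f) := by
  unfold pd
  exact (hf.fderiv_right (m := (⊤:ℕ∞)) (by exact_mod_cast le_top)).clm_apply contDiff_const

lemma pd_mul {d : ℕ} (i : Fin d) {f g : (Fin d → ℝ) → ℝ} {x : Fin d → ℝ}
    (hf : DifferentiableAt ℝ f x) (hg : DifferentiableAt ℝ g x) :
    pd i (fun y => f y * g y) x = pd i f x * g x + f x * pd i g x := by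
  unfold pd
  rw [fderiv_fun_mul hf hg]
  simp
  ring

lemma pd_const_mul {d : ℕ} (i : Fin d) (c : ℝ) {f : (Fin d → ℝ) → ℝ} {x : Fin d → ℝ}
    (hf : DifferentiableAt ℝ f x) :
    pd i (fun y => c * f y) x = c * pd i f x := by
  unfold pd
  rw [fderiv_const_mul hf]
  simp

lemma pd_sub {d : ℕ} (i : Fin d) {f g : (Fin d → ℝ) → ℝ} {x : Fin d → ℝ}
    (hf : DifferentiableAt ℝ f x) (hg : DifferentiableAt ℝ g x) :
    pd i (fun y => f y - g y) x = pd i f x - pd i g x := by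
  unfold pd
  rw [fderiv_fun_sub hf hg]
  simp

lemma pd_log {d : ℕ} (i : Fin d) {f : (Fin d → ℝ) → ℝ} {x : Fin d → ℝ}
    (hf : DifferentiableAt ℝ f x) (hne : f x ≠ 0) :
    pd i (fun y => Real.log (f y)) x = pd i f x / f x := by
  unfold pd
  rw [show (fun y => Real.log (f y)) = Real.log ∘ f from rfl,
    ((Real.hasDerivAt_log hne).comp_hasFDerivAt x hf.hasFDerivAt).fderiv]
  simp [div_eq_inv_mul]

lemma dvg_key {d : ℕ} {f g : (Fin d → ℝ) → ℝ}
    (hf : ContDiff ℝ (⊤ : ℕ∞) f) (hg : ContDiff ℝ (⊤ : ℕ∞) g) (c : ℝ) (x : Fin d → ℝ) :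
    dvg (fun y j => c * (f y * pd j g y - g y * pd j f y)) x
      = c * (f x * lap g x - g x * lap f x) := by
  have hfd : Differentiable ℝ f := hf.differentiable (by simp)
  have hgd : Differentiable ℝ g := hg.differentiable (by simp)
  unfold dvg lap
  have key : ∀ i : Fin d,
      pd i (fun y => c * (f y * pd i g y - g y * pd i f y)) x
        = c * (f x * pd i (pd i g) x - g x * pd i (pd i f) x) := by
    intro i
    have hpg : Differentiable ℝ (pd i g) := (contDiff_pd i hg).differentiable (by simp)
    have hpf : Differentiable ℝ (pd i f) := (contDiff_pd i hf).differentiable (by simp)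
    rw [pd_const_mul i c (((hfd x).fun_mul (hpg x)).fun_sub ((hgd x).fun_mul (hpf x))),
      pd_sub i ((hfd x).fun_mul (hpg x)) ((hgd x).fun_mul (hpf x)),
      pd_mul i (hfd x) (hpg x), pd_mul i (hgd x) (hpf x)]
    ring
  calc ∑ i, pd i (fun y => c * (f y * pd i g y - g y * pd i f y)) x
      = ∑ i, ((c * f x) * pd i (pd i g) x - (c * g x) * pd i (pd i f) x) :=
        Finset.sum_congr rfl fun i _ => by rw [key i]; ring
    _ = c * (f x * ∑ i, pd i (pd i g) x - g x * ∑ i, pd i (pd i f) x) := by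
        rw [Finset.sum_sub_distrib, ← Finset.mul_sum, ← Finset.mul_sum]; ring

lemma field_eq {d : ℕ} {f g : (Fin d → ℝ) → ℝ}
    (hf : ContDiff ℝ (⊤ : ℕ∞) f) (hg : ContDiff ℝ (⊤ : ℕ∞) g)
    (hfpos : ∀ x, 0 < f x) (hgpos : ∀ x, 0 < g x) :
    (fun (y : Fin d → ℝ) (j : Fin d) => f y * g y *
        ((1/2) * grad (fun z => Real.log (g z) - Real.log (f z)) y j))
      = fun y j => (1/2) * (f y * pd j g y - g y * pd j f y) := by
  funext y j
  have hfd := (hf.differentiable (by simp)) y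
  have hgd := (hg.differentiable (by simp)) y
  have hfne := (hfpos y).ne'
  have hgne := (hgpos y).ne'
  unfold grad
  rw [pd_sub j (hgd.log hgne) (hfd.log hfne), pd_log j hgd hgne, pd_log j hfd hfne]
  field_simp

lemma field_eq2 {d : ℕ} {f g : (Fin d → ℝ) → ℝ}
    (hf : ContDiff ℝ (⊤ : ℕ∞) f) (hg : ContDiff ℝ (⊤ : ℕ∞) g)
    (hfpos : ∀ x, 0 < f x) (hgpos : ∀ x, 0 < g x) :
    (fun (y : Fin d → ℝ) (j : Fin d) => f y * g y *
        (grad (fun z => Real.log (f z)) y j - grad (fun z => Real.log (g z)) y j))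
      = fun y j => (1 : ℝ) * (g y * pd j f y - f y * pd j g y) := by
  funext y j
  have hfd := (hf.differentiable (by simp)) y
  have hgd := (hg.differentiable (by simp)) y
  have hfne := (hfpos y).ne'
  have hgne := (hgpos y).ne'
  unfold grad
  rw [pd_log j hfd hfne, pd_log j hgd hgne]
  field_simp


/-- Lemma 3.2 of the paper (computational core): `μ := f̃ g̃` together with the
velocity field `v := (1/2)∇(log g̃ - log f̃)` satisfy the continuity equation
`∂ₜ μ + div(μ v) = 0`; equivalently `∂ₜ(f̃ g̃) = (1/2) div(f̃ g̃ (∇log f̃ - ∇log g̃))`. -/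
theorem continuity_equation_bridge
    (d : ℕ) (hd : 1 ≤ d)
    (V : (Fin d → ℝ) → ℝ) (hV : ContDiff ℝ (⊤ : ℕ∞) V)
    (F G : ℝ → (Fin d → ℝ) → ℝ)
    (hF : ContDiffOn ℝ (⊤ : ℕ∞) (fun p : ℝ × (Fin d → ℝ) => F p.1 p.2)
      (Set.Ioo 0 1 ×ˢ Set.univ))
    (hG : ContDiffOn ℝ (⊤ : ℕ∞) (fun p : ℝ × (Fin d → ℝ) => G p.1 p.2)
      (Set.Ioo 0 1 ×ˢ Set.univ))
    (hFpos : ∀ t ∈ Set.Ioo (0:ℝ) 1, ∀ x, 0 < F t x)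
    (hGpos : ∀ t ∈ Set.Ioo (0:ℝ) 1, ∀ x, 0 < G t x)
    (heF : ∀ t ∈ Set.Ioo (0:ℝ) 1, ∀ x,
      deriv (fun s => F s x) t = (1/2) * lap (F t) x - V x * F t x)
    (heG : ∀ t ∈ Set.Ioo (0:ℝ) 1, ∀ x,
      deriv (fun s => G s x) t = -(1/2) * lap (G t) x + V x * G t x) :
    ∀ t ∈ Set.Ioo (0:ℝ) 1, ∀ x,
      (deriv (fun s => F s x * G s x) t
          + dvg (fun y j => F t y * G t y *
              ((1/2) * grad (fun z => Real.log (G t z) - Real.log (F t z)) y j)) x = 0)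
      ∧ (deriv (fun s => F s x * G s x) t
          = (1/2) * dvg (fun y j => F t y * G t y *
              (grad (fun z => Real.log (F t z)) y j
                - grad (fun z => Real.log (G t z)) y j)) x) := by
  intro t ht x
  have hmem : (t, x) ∈ Set.Ioo (0:ℝ) 1 ×ˢ (Set.univ : Set (Fin d → ℝ)) := ⟨ht, trivial⟩
  have hopen : IsOpen (Set.Ioo (0:ℝ) 1 ×ˢ (Set.univ : Set (Fin d → ℝ))) :=
    isOpen_Ioo.prod isOpen_univ
  have hnhds := hopen.mem_nhds hmem
  -- spatial smoothness
  have hFt : ContDiff ℝ (⊤ : ℕ∞) (F t) := by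
    rw [← contDiffOn_univ]
    exact hF.comp ((contDiff_const.prodMk contDiff_id).contDiffOn) (fun y _ => ⟨ht, trivial⟩)
  have hGt : ContDiff ℝ (⊤ : ℕ∞) (G t) := by
    rw [← contDiffOn_univ]
    exact hG.comp ((contDiff_const.prodMk contDiff_id).contDiffOn) (fun y _ => ⟨ht, trivial⟩)
  -- time differentiability
  have hFdt : DifferentiableAt ℝ (fun s => F s x) t := by
    have := (hF.contDiffAt hnhds).comp t
      ((contDiffAt_id.prodMk contDiffAt_const) : ContDiffAt ℝ (⊤ : ℕ∞) (fun s : ℝ => (s, x)) t)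
    exact this.differentiableAt (by simp)
  have hGdt : DifferentiableAt ℝ (fun s => G s x) t := by
    have := (hG.contDiffAt hnhds).comp t
      ((contDiffAt_id.prodMk contDiffAt_const) : ContDiffAt ℝ (⊤ : ℕ∞) (fun s : ℝ => (s, x)) t)
    exact this.differentiableAt (by simp)
  have hDprod : deriv (fun s => F s x * G s x) t
      = deriv (fun s => F s x) t * G t x + F t x * deriv (fun s => G s x) t :=
    deriv_fun_mul hFdt hGdt
  have hderiv : deriv (fun s => F s x * G s x) t
      = (1/2) * (G t x * lap (F t) x - F t x * lap (G t) x) := by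
    rw [hDprod, heF t ht x, heG t ht x]; ring
  constructor
  · rw [field_eq hFt hGt (hFpos t ht) (hGpos t ht),
      dvg_key hFt hGt (1/2) x, hderiv]
    ring
  · rw [field_eq2 hFt hGt (hFpos t ht) (hGpos t ht),
      dvg_key hGt hFt 1 x, hderiv]
    ring


end
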